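/- Let Γ be a finite nonempty set of d×d matrices over Z_max. Then the joint spectral radius ρ(Γ) = inf_{ℓ>0} min{ (1/ℓ)‖M_1⋯M_ℓ‖_∞ : M_i ∈ Γ } equals inf_{ℓ>0} min{ (1/ℓ)ρ(M_1⋯M_ℓ) : M_i ∈ Γ }, where ρ(M) is the tropical spectral radius of a single matrix. -/

import Mathlib

open Filter

/-- The tropical (max-plus) semiring ℤ ∪ {-∞}: addition is max (lattice sup),
`+` is the tropical product with `⊥` absorbing. -/
abbrev Zmax : Type := WithBot ℤ

/-- Square matrices over `Zmax`. -/
abbrev Mat (d : ℕ) : Type := Fin d → Fin d → Zmax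

/-- Tropical matrix product: `(A⊗B) i j = max_k (A i k + B k j)`. -/
def tmul {d : ℕ} (A B : Mat d) : Mat d :=
  fun i j => Finset.univ.sup fun k => A i k + B k j

/-- Maximal entry of a matrix (`-∞` for the all-`⊥` matrix). -/
def tnorm {d : ℕ} (M : Mat d) : Zmax :=
  Finset.univ.sup fun i => Finset.univ.sup fun j => M i j

/-- Product of a list of matrices (junk value, the all-`⊥` matrix, on `[]`;
only used on nonempty lists). -/
def prodL {d : ℕ} : List (Mat d) → Mat d
  | [] => fun _ _ => ⊥
  | [M] => M
  | M :: N :: L => tmul M (prodL (N :: L))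

/-- Tropical identity matrix. -/
def tId (d : ℕ) : Mat d := fun i j => if i = j then (0 : Zmax) else ⊥

/-- Tropical matrix power. -/
def tpow {d : ℕ} (M : Mat d) : ℕ → Mat d
  | 0 => tId d
  | n+1 => tmul M (tpow M n)

/-- The subsemigroup generated by a set of matrices: all nonempty finite products. -/
def semi {d : ℕ} (Γ : Set (Mat d)) : Set (Mat d) :=
  {M | ∃ L : List (Mat d), L ≠ [] ∧ (∀ N ∈ L, N ∈ Γ) ∧ prodL L = M}

/-- Embedding of `Zmax = ℤ ∪ {-∞}` into `EReal`. -/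
noncomputable def z2e (x : Zmax) : EReal :=
  WithBot.recBotCoe ⊥ (fun n : ℤ => ((n : ℝ) : EReal)) x

/-- `minNorm Γ ℓ` is the minimum over all products of `ℓ` matrices from `Γ`
of `‖M₁⋯M_ℓ‖_∞ / ℓ`, as an extended real. -/
noncomputable def minNorm {d : ℕ} (Γ : Set (Mat d)) (ℓ : ℕ) : EReal :=
  sInf {x | ∃ L : List (Mat d), L.length = ℓ ∧ (∀ N ∈ L, N ∈ Γ) ∧
    x = z2e (tnorm (prodL L)) / (ℓ : EReal)}

/-- Joint spectral radius: `inf_{ℓ>0} min{ ‖M₁⋯M_ℓ‖_∞/ℓ : Mᵢ ∈ Γ }`. -/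
noncomputable def jsr {d : ℕ} (Γ : Set (Mat d)) : EReal :=
  ⨅ (ℓ : ℕ) (_ : 0 < ℓ), minNorm Γ ℓ

/-- Weight of the cycle `c 0 → c 1 → ⋯ → c ℓ → c 0` (length `ℓ+1`),
addition of `Fin (ℓ+1)` being cyclic. -/
def cycWeight {d : ℕ} (M : Mat d) {ℓ : ℕ} (c : Fin (ℓ+1) → Fin d) : Zmax :=
  ∑ k : Fin (ℓ+1), M (c k) (c (k+1))

/-- Tropical spectral radius of a single matrix: the maximal average weight of
cycles in the graph of `M` (and `-∞` if there is no cycle of finite weight). -/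
noncomputable def rho {d : ℕ} (M : Mat d) : EReal :=
  ⨆ (ℓ : ℕ) (c : Fin (ℓ+1) → Fin d), z2e (cycWeight M c) / ((ℓ+1 : ℕ) : EReal)

/-- A critical cycle: a cycle with finite weight whose average weight is `rho M`. -/
def IsCritCycle {d : ℕ} (M : Mat d) {ℓ : ℕ} (c : Fin (ℓ+1) → Fin d) : Prop :=
  cycWeight M c ≠ ⊥ ∧ z2e (cycWeight M c) / ((ℓ+1 : ℕ) : EReal) = rho M

/-- Edges of the critical graph: edges lying on some critical cycle. -/
def critEdge {d : ℕ} (M : Mat d) (i j : Fin d) : Prop :=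
  ∃ (ℓ : ℕ) (c : Fin (ℓ+1) → Fin d) (k : Fin (ℓ+1)),
    IsCritCycle M c ∧ c k = i ∧ c (k+1) = j

/-- Vertices of the critical graph. -/
def critVertex {d : ℕ} (M : Mat d) (i : Fin d) : Prop :=
  ∃ j, critEdge M i j ∨ critEdge M j i

/-- Strongly connected components of the critical graph: maximal sets of critical
vertices that are pairwise connected by paths in the critical graph. -/
def IsSCC {d : ℕ} (M : Mat d) (S : Set (Fin d)) : Prop :=
  (∀ i ∈ S, critVertex M i) ∧
  (∀ i ∈ S, ∀ j ∈ S, Relation.ReflTransGen (critEdge M) i j) ∧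
  (∀ T : Set (Fin d), S ⊆ T → (∀ i ∈ T, critVertex M i) →
    (∀ i ∈ T, ∀ j ∈ T, Relation.ReflTransGen (critEdge M) i j) → T = S)

/-- Greatest common divisor of a set of natural numbers. -/
noncomputable def setGcd (A : Set ℕ) : ℕ :=
  sInf {g | (∀ a ∈ A, g ∣ a) ∧ ∀ h, (∀ a ∈ A, h ∣ a) → h ∣ g}

/-- Cyclicity of a strongly connected component `S` of the critical graph of `M`:
the gcd of the lengths of the cycles of the critical graph lying in `S`. -/
noncomputable def cyclicity {d : ℕ} (M : Mat d) (S : Set (Fin d)) : ℕ :=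
  setGcd {n | ∃ (ℓ : ℕ) (c : Fin (ℓ+1) → Fin d), n = ℓ + 1 ∧
    (∀ k, critEdge M (c k) (c (k+1))) ∧ (∀ k, c k ∈ S)}

/-- Ultimate rank of a matrix: the sum of the cyclicities of the strongly
connected components of its critical graph. -/
noncomputable def urk {d : ℕ} (M : Mat d) : ℕ :=
  ∑ᶠ (S : Set (Fin d)) (_ : IsSCC M S), cyclicity M S

/-- `k ⊙ M`: add the integer `k` to every entry. -/
def kadd {d : ℕ} (k : ℤ) (M : Mat d) : Mat d := fun i j => (k : Zmax) + M i j

/-- Value `I M F` computed from an initial row vector, a matrix and a final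
column vector. -/
def runVal {d : ℕ} (I : Fin d → Zmax) (M : Mat d) (F : Fin d → Zmax) : Zmax :=
  Finset.univ.sup fun i => Finset.univ.sup fun j => I i + M i j + F j

section Aux

open Finset

/-! ### basic Zmax / z2e lemmas -/

lemma z2e_bot : z2e ⊥ = ⊥ := rfl
lemma z2e_coe (n : ℤ) : z2e (n : Zmax) = ((n : ℝ) : EReal) := rfl

lemma z2e_mono : Monotone z2e := by
  intro x y h
  induction x using WithBot.recBotCoe with
  | bot => simp [z2e_bot]
  | coe a =>
    induction y using WithBot.recBotCoe with
    | bot => simp at h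
    | coe b =>
      rw [z2e_coe, z2e_coe]
      have : a ≤ b := by exact_mod_cast h
      exact_mod_cast this

lemma z2e_add (x y : Zmax) : z2e (x + y) = z2e x + z2e y := by
  induction x using WithBot.recBotCoe with
  | bot => simp [z2e_bot]
  | coe a =>
    induction y using WithBot.recBotCoe with
    | bot => simp [z2e_bot, z2e_coe]
    | coe b =>
      rw [← WithBot.coe_add, z2e_coe, z2e_coe, z2e_coe]
      push_cast
      ring

noncomputable def z2eHom : Zmax →+ EReal where
  toFun := z2e
  map_zero' := by show z2e ((0:ℤ) : Zmax) = 0; rw [z2e_coe]; norm_num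
  map_add' := z2e_add

lemma z2e_sum {α : Type*} (s : Finset α) (f : α → Zmax) :
    z2e (∑ a ∈ s, f a) = ∑ a ∈ s, z2e (f a) := map_sum z2eHom f s

lemma z2e_ne_top (x : Zmax) : z2e x ≠ ⊤ := by
  induction x using WithBot.recBotCoe with
  | bot => simp [z2e_bot]
  | coe a => simp [z2e_coe]

lemma z2e_eq_bot_iff {x : Zmax} : z2e x = ⊥ ↔ x = ⊥ := by
  induction x using WithBot.recBotCoe with
  | bot => simp [z2e_bot]
  | coe a => simp [z2e_coe]

lemma sum_eq_bot {α : Type*} {s : Finset α} {f : α → Zmax} {a : α} (ha : a ∈ s)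
    (h : f a = ⊥) : ∑ b ∈ s, f b = ⊥ := by
  classical
  rw [← Finset.add_sum_erase s f ha, h, WithBot.bot_add]

/-! ### sup lemmas -/

lemma le_tnorm {d : ℕ} (M : Mat d) (i j : Fin d) : M i j ≤ tnorm M := by
  refine le_trans ?_ (Finset.le_sup (f := fun i => Finset.univ.sup fun j => M i j)
    (Finset.mem_univ i))
  exact Finset.le_sup (Finset.mem_univ j)

lemma tnorm_le {d : ℕ} {M : Mat d} {x : Zmax} (h : ∀ i j, M i j ≤ x) : tnorm M ≤ x := by
  refine Finset.sup_le fun i _ => Finset.sup_le fun j _ => h i j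

lemma add_finsetSup {α : Type*} (s : Finset α) (f : α → Zmax) (a : Zmax) :
    a + s.sup f = s.sup fun b => a + f b := by
  classical
  rcases s.eq_empty_or_nonempty with rfl | hs
  · simp
  · obtain ⟨b, hb, hab⟩ := Finset.exists_mem_eq_sup s hs f
    refine le_antisymm ?_ (Finset.sup_le fun c hc => add_le_add_right (Finset.le_sup hc) a)
    rw [hab]
    exact Finset.le_sup (f := fun b => a + f b) hb

lemma finsetSup_add {α : Type*} (s : Finset α) (f : α → Zmax) (a : Zmax) :
    s.sup f + a = s.sup fun b => f b + a := by
  classical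
  rcases s.eq_empty_or_nonempty with rfl | hs
  · simp
  · obtain ⟨b, hb, hab⟩ := Finset.exists_mem_eq_sup s hs f
    refine le_antisymm ?_ (Finset.sup_le fun c hc => add_le_add_left (Finset.le_sup hc) a)
    rw [hab]
    exact Finset.le_sup (f := fun b => f b + a) hb

/-! ### tmul lemmas -/

lemma tmul_assoc {d : ℕ} (A B C : Mat d) : tmul (tmul A B) C = tmul A (tmul B C) := by
  funext i j
  show Finset.univ.sup (fun k => (Finset.univ.sup fun l => A i l + B l k) + C k j)
      = Finset.univ.sup fun l => A i l + Finset.univ.sup fun k => B l k + C k j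
  simp only [finsetSup_add, add_finsetSup]
  rw [Finset.sup_comm]
  simp only [add_assoc]

lemma tmul_tId {d : ℕ} (M : Mat d) : tmul M (tId d) = M := by
  funext i j
  show Finset.univ.sup (fun k => M i k + if k = j then (0:Zmax) else ⊥) = M i j
  refine le_antisymm (Finset.sup_le fun k _ => ?_) ?_
  · by_cases h : k = j
    · simp [h]
    · simp [h]
  · have := Finset.le_sup (f := fun k => M i k + if k = j then (0:Zmax) else ⊥)
      (Finset.mem_univ j)
    simpa using this

end Aux
section Aux2

lemma prodL_cons {d : ℕ} (M : Mat d) {L : List (Mat d)} (hL : L ≠ []) :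
    prodL (M :: L) = tmul M (prodL L) := by
  cases L with
  | nil => exact absurd rfl hL
  | cons N L' => rfl

lemma prodL_append {d : ℕ} {A B : List (Mat d)} (hA : A ≠ []) (hB : B ≠ []) :
    prodL (A ++ B) = tmul (prodL A) (prodL B) := by
  induction A with
  | nil => exact absurd rfl hA
  | cons M A' ih =>
    cases A' with
    | nil =>
      simp only [List.singleton_append]
      rw [prodL_cons M hB]
      rfl
    | cons N A'' =>
      have h1 : (N :: A'') ≠ [] := by simp
      have h2 : (N :: A'') ++ B ≠ [] := by simp
      rw [List.cons_append, prodL_cons M h2, ih h1, prodL_cons M h1, tmul_assoc]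

lemma tpow_one {d : ℕ} (M : Mat d) : tpow M 1 = M := tmul_tId M

lemma prodL_join_replicate {d : ℕ} (L : List (Mat d)) (hL : L ≠ []) (n : ℕ) (hn : 0 < n) :
    prodL (List.replicate n L).flatten = tpow (prodL L) n := by
  induction n with
  | zero => omega
  | succ m ih =>
    rcases Nat.eq_zero_or_pos m with rfl | hm
    · simp only [Nat.zero_add, List.replicate_one, List.flatten]
      show prodL (L ++ []) = tpow (prodL L) 1
      rw [List.append_nil, tpow_one]
    · have hjoin : (List.replicate m L).flatten ≠ [] := by
        have : (List.replicate m L).flatten.length = m * L.length := by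
          simp [List.length_flatten, List.map_replicate]
        intro h
        rw [h] at this
        simp at this
        rcases this with h' | h'
        · omega
        · exact hL h'
      rw [List.replicate_succ,
        show (L :: List.replicate m L).flatten = L ++ (List.replicate m L).flatten from rfl,
        prodL_append hL hjoin, ih hm]
      rfl

/-- every entry of a tropical power is bounded by the weight of some path -/
lemma exists_path {d : ℕ} (M : Mat d) (n : ℕ) (i j : Fin d) :
    tpow M n i j = ⊥ ∨ ∃ p : ℕ → Fin d, p 0 = i ∧ p n = j ∧
      tpow M n i j ≤ ∑ k ∈ Finset.range n, M (p k) (p (k+1)) := by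
  induction n generalizing i j with
  | zero =>
    by_cases h : i = j
    · subst h
      right
      exact ⟨fun _ => i, rfl, rfl, by simp [tpow, tId]⟩
    · left
      simp [tpow, tId, h]
  | succ m ih =>
    have hne : (Finset.univ : Finset (Fin d)).Nonempty := ⟨i, Finset.mem_univ i⟩
    obtain ⟨k, -, hk⟩ := Finset.exists_mem_eq_sup Finset.univ hne
      (fun k => M i k + tpow M m k j)
    have hpow : tpow M (m+1) i j = M i k + tpow M m k j := hk
    rcases ih k j with hbot | ⟨p, hp0, hpm, hple⟩
    · left
      rw [hpow, hbot, WithBot.add_bot]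
    · by_cases hMik : M i k = ⊥
      · left
        rw [hpow, hMik, WithBot.bot_add]
      · right
        refine ⟨fun m => if m = 0 then i else p (m-1), rfl, by simp [hpm], ?_⟩
        rw [Finset.sum_range_succ', hpow, add_comm (M i k)]
        refine add_le_add
          (hple.trans (le_of_eq (Finset.sum_congr rfl fun t _ => by simp)))
          (by simp [hp0])

lemma exists_repeat {d : ℕ} (p : ℕ → Fin d) :
    ∃ a b, a < b ∧ b ≤ d ∧ p a = p b := by
  have hcard : Fintype.card (Fin d) < Fintype.card (Fin (d+1)) := by simp
  obtain ⟨x, y, hxy, hpxy⟩ := Fintype.exists_ne_map_eq_of_card_lt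
    (fun k : Fin (d+1) => p k.val) hcard
  rcases lt_or_gt_of_ne (fun h => hxy (Fin.ext (by exact_mod_cast congrArg Fin.val h))) with h | h
  · exact ⟨x.val, y.val, h, Nat.lt_succ_iff.mp y.isLt, hpxy⟩
  · exact ⟨y.val, x.val, h, Nat.lt_succ_iff.mp x.isLt, hpxy.symm⟩

end Aux2
section Aux3

/-- weight of the segment `[s,t)` of the path `p` -/
def segW {d : ℕ} (M : Mat d) (p : ℕ → Fin d) (s t : ℕ) : Zmax :=
  ∑ k ∈ Finset.Ico s t, M (p k) (p (k+1))

lemma segW_split {d : ℕ} (M : Mat d) (p : ℕ → Fin d) {a b n : ℕ}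
    (hab : a ≤ b) (hbn : b ≤ n) :
    ∑ k ∈ Finset.range n, M (p k) (p (k+1)) =
      segW M p 0 a + segW M p a b + segW M p b n := by
  rw [Finset.range_eq_Ico]
  unfold segW
  rw [Finset.sum_Ico_consecutive _ (Nat.zero_le a) hab,
    Finset.sum_Ico_consecutive _ (Nat.zero_le b) hbn]

lemma cycWeight_seg {d : ℕ} (M : Mat d) (p : ℕ → Fin d) {a b : ℕ}
    (hab : a < b) (hpb : p a = p b) :
    cycWeight M (fun k : Fin ((b-a-1)+1) => p (a + k.val)) = segW M p a b := by
  set ℓ := b - a - 1 with hℓ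
  have hba : b - a = ℓ + 1 := by omega
  unfold segW cycWeight
  rw [Finset.sum_Ico_eq_sum_range, hba, Finset.sum_range_succ, Fin.sum_univ_castSucc]
  congr 1
  · rw [← Fin.sum_univ_eq_sum_range (fun t => M (p (a + t)) (p (a + t + 1))) ℓ]
    refine Finset.sum_congr rfl fun i _ => ?_
    have h1 : (i.castSucc + 1).val = i.val + 1 := by
      rw [Fin.val_add_one]
      simp [Fin.ext_iff, (Fin.castSucc_lt_last i).ne]
    simp only [Fin.coe_castSucc, h1, Nat.add_assoc]
  · have h2 : ((Fin.last ℓ) + 1).val = 0 := by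
      rw [Fin.val_add_one, if_pos rfl]
    simp only [Fin.val_last, h2, Nat.add_zero]
    rw [hpb]
    congr 2
    omega

lemma splice_eq {d : ℕ} (M : Mat d) (p : ℕ → Fin d) {a b n : ℕ}
    (hab : a < b) (hbn : b ≤ n) (hpb : p a = p b) :
    ∑ k ∈ Finset.range n, M (p k) (p (k+1)) =
      (∑ k ∈ Finset.range (n - (b-a)),
        M ((fun m => if m < a then p m else p (m + (b-a))) k)
          ((fun m => if m < a then p m else p (m + (b-a))) (k+1)))
      + segW M p a b := by
  set δ := b - a with hδ
  set q : ℕ → Fin d := fun m => if m < a then p m else p (m + δ) with hq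
  have hq_shift : ∀ t, q (a + t) = p (b + t) := by
    intro t
    have : ¬ (a + t < a) := by omega
    rw [hq]
    simp only [this, if_false]
    congr 1
    omega
  have hsum1 : ∑ k ∈ Finset.Ico 0 a, M (q k) (q (k+1)) = segW M p 0 a := by
    refine Finset.sum_congr rfl fun k hk => ?_
    have hk' : k < a := (Finset.mem_Ico.mp hk).2
    have hqk : q k = p k := by rw [hq]; simp [hk']
    by_cases h1 : k + 1 < a
    · have : q (k+1) = p (k+1) := by rw [hq]; simp [h1]
      rw [hqk, this]
    · have hk1 : k + 1 = a := by omega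
      have : q (k+1) = p (k+1) := by
        rw [hq]
        simp only [h1, if_false]
        rw [hk1]
        have : a + δ = b := by omega
        rw [this, ← hpb]
      rw [hqk, this]
  have han : a ≤ n - δ := by omega
  have hsum2 : ∑ k ∈ Finset.Ico a (n - δ), M (q k) (q (k+1)) = segW M p b n := by
    unfold segW
    rw [Finset.sum_Ico_eq_sum_range, Finset.sum_Ico_eq_sum_range]
    have hcard : n - δ - a = n - b := by omega
    rw [hcard]
    refine Finset.sum_congr rfl fun t _ => ?_
    have e1 : q (a + t) = p (b + t) := hq_shift t
    have e2 : q (a + t + 1) = p (b + t + 1) := by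
      have : a + t + 1 = a + (t + 1) := by omega
      rw [this, hq_shift (t+1), Nat.add_assoc]
    rw [e1, e2]
  have hsplit : ∑ k ∈ Finset.range (n - δ), M (q k) (q (k+1)) =
      (∑ k ∈ Finset.Ico 0 a, M (q k) (q (k+1)))
        + ∑ k ∈ Finset.Ico a (n - δ), M (q k) (q (k+1)) := by
    rw [Finset.range_eq_Ico, ← Finset.sum_Ico_consecutive _ (Nat.zero_le a) han]
  rw [segW_split M p hab.le hbn]
  show segW M p 0 a + segW M p a b + segW M p b n
    = (∑ k ∈ Finset.range (n - δ), M (q k) (q (k+1))) + segW M p a b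
  rw [hsplit, hsum1, hsum2]
  ac_rfl

end Aux3
section Aux4

noncomputable def r2eHom : ℝ →+ EReal where
  toFun := fun r => (r : EReal)
  map_zero' := rfl
  map_add' := EReal.coe_add

lemma r2e_sum {α : Type*} (s : Finset α) (f : α → ℝ) :
    ∑ a ∈ s, ((f a : ℝ) : EReal) = ((∑ a ∈ s, f a : ℝ) : EReal) :=
  (map_sum r2eHom f s).symm

lemma natCast_ereal_pos {k : ℕ} (hk : 0 < k) : (0 : EReal) < (k : EReal) := by
  rw [← EReal.coe_coe_eq_natCast]
  exact_mod_cast (by exact_mod_cast hk : (0:ℝ) < (k:ℝ))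

lemma le_rho {d : ℕ} (M : Mat d) (ℓ : ℕ) (c : Fin (ℓ+1) → Fin d) :
    z2e (cycWeight M c) / ((ℓ+1 : ℕ) : EReal) ≤ rho M :=
  le_iSup₂ (f := fun ℓ (c : Fin (ℓ+1) → Fin d) =>
    z2e (cycWeight M c) / ((ℓ+1 : ℕ) : EReal)) ℓ c

lemma cyc_le_of_rho_le {d : ℕ} {M : Mat d} {r : ℝ} (h : rho M ≤ (r : EReal))
    {ℓ : ℕ} (c : Fin (ℓ+1) → Fin d) :
    z2e (cycWeight M c) ≤ ((((ℓ:ℝ)+1) * r : ℝ) : EReal) := by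
  have h1 := (le_rho M ℓ c).trans h
  rw [EReal.div_le_iff_le_mul (natCast_ereal_pos (Nat.succ_pos ℓ))
    (EReal.natCast_ne_top _)] at h1
  refine h1.trans (le_of_eq ?_)
  rw [← EReal.coe_coe_eq_natCast, ← EReal.coe_mul]
  norm_num

lemma cyc_bot_of_rho_bot {d : ℕ} {M : Mat d} (h : rho M = ⊥)
    {ℓ : ℕ} (c : Fin (ℓ+1) → Fin d) : cycWeight M c = ⊥ := by
  have h1 := (le_rho M ℓ c).trans_eq h
  rw [le_bot_iff] at h1
  by_contra hne
  rcases WithBot.ne_bot_iff_exists.mp hne with ⟨m, hm⟩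
  rw [← hm, z2e_coe, ← EReal.coe_coe_eq_natCast, ← EReal.coe_div] at h1
  exact EReal.coe_ne_bot _ h1

lemma path_weight_bot {d : ℕ} {M : Mat d} (h : rho M = ⊥) {n : ℕ} (hn : d ≤ n)
    (p : ℕ → Fin d) : ∑ k ∈ Finset.range n, M (p k) (p (k+1)) = ⊥ := by
  obtain ⟨a, b, hab, hbd, hpb⟩ := exists_repeat p
  have hseg : segW M p a b = ⊥ := by
    rw [← cycWeight_seg M p hab hpb]
    exact cyc_bot_of_rho_bot h _
  rw [segW_split M p hab.le (hbd.trans hn), hseg, WithBot.add_bot, WithBot.bot_add]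

lemma path_weight_le {d : ℕ} (M : Mat d) {r B : ℝ} (hr : rho M ≤ (r : EReal))
    (hB : ∀ i j, z2e (M i j) ≤ (B : EReal)) (n : ℕ) (p : ℕ → Fin d) :
    z2e (∑ k ∈ Finset.range n, M (p k) (p (k+1)))
      ≤ (((n:ℝ) * r + (d:ℝ) * max (B - r) 0 : ℝ) : EReal) := by
  induction n using Nat.strong_induction_on generalizing p with
  | _ n ih =>
  by_cases hnd : n < d
  · -- short path: bound each edge by B
    have h1 : z2e (∑ k ∈ Finset.range n, M (p k) (p (k+1)))
        = ∑ k ∈ Finset.range n, z2e (M (p k) (p (k+1))) := z2e_sum _ _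
    have h2 : ∑ k ∈ Finset.range n, z2e (M (p k) (p (k+1)))
        ≤ ∑ _k ∈ Finset.range n, ((B:ℝ) : EReal) :=
      Finset.sum_le_sum fun k _ => hB _ _
    have h3 : ∑ _k ∈ Finset.range n, ((B:ℝ) : EReal) = (((n:ℝ) * B : ℝ) : EReal) := by
      rw [r2e_sum]
      norm_num [mul_comm]
    rw [h1]
    refine (h2.trans_eq h3).trans ?_
    rw [EReal.coe_le_coe_iff]
    have hnd' : (n:ℝ) ≤ (d:ℝ) := by exact_mod_cast hnd.le
    nlinarith [le_max_left (B - r) (0:ℝ), le_max_right (B - r) (0:ℝ),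
      Nat.cast_nonneg (α := ℝ) n]
  · -- long path: extract a cycle
    push_neg at hnd
    obtain ⟨a, b, hab, hbd, hpb⟩ := exists_repeat p
    have hbn : b ≤ n := hbd.trans hnd
    set δ := b - a with hδ
    have hδ1 : 1 ≤ δ := by omega
    have hδn : δ ≤ n := by omega
    rw [splice_eq M p hab hbn hpb, z2e_add]
    have hcyc : z2e (segW M p a b) ≤ ((((b-a-1:ℕ):ℝ)+1) * r : ℝ) := by
      rw [← cycWeight_seg M p hab hpb]
      exact cyc_le_of_rho_le hr _
    have hrec := ih (n - δ) (by omega) (fun m => if m < a then p m else p (m + δ))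
    refine (add_le_add hrec hcyc).trans (le_of_eq ?_)
    rw [← EReal.coe_add, EReal.coe_eq_coe_iff]
    have e1 : ((n - δ : ℕ) : ℝ) = (n:ℝ) - (δ:ℝ) := by
      rw [Nat.cast_sub hδn]
    have e2 : ((b - a - 1 : ℕ) : ℝ) + 1 = (δ:ℝ) := by
      rw [hδ]
      have : b - a - 1 + 1 = b - a := by omega
      exact_mod_cast congrArg (Nat.cast : ℕ → ℝ) this
    rw [e1, e2]
    ring

lemma z2e_tnorm_le {d : ℕ} {M : Mat d} {x : EReal} (h : ∀ i j, z2e (M i j) ≤ x) :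
    z2e (tnorm M) ≤ x := by
  rcases (Finset.univ : Finset (Fin d)).eq_empty_or_nonempty with he | hne
  · unfold tnorm
    rw [he, Finset.sup_empty]
    exact bot_le
  · obtain ⟨i, _, hi⟩ := Finset.exists_mem_eq_sup _ hne
      (fun i => Finset.univ.sup fun j => M i j)
    obtain ⟨j, _, hj⟩ := Finset.exists_mem_eq_sup _ hne (fun j => M i j)
    show z2e (Finset.univ.sup fun i => Finset.univ.sup fun j => M i j) ≤ x
    rw [hi, hj]
    exact h i j

lemma tnorm_tpow_bot {d : ℕ} {M : Mat d} (h : rho M = ⊥) {n : ℕ} (hn : d ≤ n) :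
    tnorm (tpow M n) = ⊥ := by
  refine le_bot_iff.mp (tnorm_le fun i j => ?_)
  rcases exists_path M n i j with h0 | ⟨p, _, _, hle⟩
  · exact h0.le
  · exact hle.trans (le_of_eq (path_weight_bot h hn p))

lemma tnorm_tpow_le {d : ℕ} (M : Mat d) {r B : ℝ} (hr : rho M ≤ (r : EReal))
    (hB : ∀ i j, z2e (M i j) ≤ (B : EReal)) (n : ℕ) :
    z2e (tnorm (tpow M n)) ≤ (((n:ℝ) * r + (d:ℝ) * max (B - r) 0 : ℝ) : EReal) := by
  refine z2e_tnorm_le fun i j => ?_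
  rcases exists_path M n i j with h0 | ⟨p, _, _, hle⟩
  · rw [z2e_eq_bot_iff.mpr h0]; exact bot_le
  · exact (z2e_mono hle).trans (path_weight_le M hr hB n p)

lemma rho_le_tnorm {d : ℕ} (M : Mat d) : rho M ≤ z2e (tnorm M) := by
  refine iSup₂_le fun ℓ c => ?_
  cases htn : tnorm M with
  | none =>
    have hcw : cycWeight M c = ⊥ := by
      refine sum_eq_bot (Finset.mem_univ (0 : Fin (ℓ+1))) ?_
      exact le_bot_iff.mp ((le_tnorm M _ _).trans htn.le)
    rw [hcw, z2e_bot, EReal.bot_div_of_pos_ne_top (natCast_ereal_pos (Nat.succ_pos ℓ))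
      (EReal.natCast_ne_top _)]
    exact bot_le
  | some t =>
    have hcw : z2e (cycWeight M c) ≤ ((((ℓ:ℝ)+1) * (t:ℝ) : ℝ) : EReal) := by
      unfold cycWeight
      rw [z2e_sum]
      have : ∀ k : Fin (ℓ+1), z2e (M (c k) (c (k+1))) ≤ (((t:ℤ):ℝ) : EReal) := by
        intro k
        refine z2e_mono ((le_tnorm M _ _).trans_eq htn)
      refine (Finset.sum_le_sum fun k _ => this k).trans (le_of_eq ?_)
      rw [r2e_sum]
      norm_num [mul_comm]
    rw [EReal.div_le_iff_le_mul (natCast_ereal_pos (Nat.succ_pos ℓ))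
      (EReal.natCast_ne_top _)]
    refine hcw.trans (le_of_eq ?_)
    show ((((ℓ:ℝ)+1) * ((t:ℤ):ℝ) : ℝ) : EReal) = ((ℓ.succ : ℕ) : EReal) * (((t:ℤ):ℝ) : EReal)
    rw [← EReal.coe_coe_eq_natCast, ← EReal.coe_mul]
    norm_num

end Aux4
section Aux5

lemma length_join_replicate {d : ℕ} (n : ℕ) (L : List (Mat d)) :
    ((List.replicate n L).flatten).length = n * L.length := by
  simp [List.length_flatten, List.map_replicate, List.sum_replicate]

lemma jsr_le_rho {d : ℕ} (Γ : Set (Mat d)) {ℓ : ℕ} (hℓ : 0 < ℓ) {L : List (Mat d)}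
    (hlen : L.length = ℓ) (hmem : ∀ N ∈ L, N ∈ Γ) :
    jsr Γ ≤ rho (prodL L) / (ℓ : EReal) := by
  set P := prodL L with hP
  have hLne : L ≠ [] := by
    intro h; rw [h] at hlen; simp at hlen; omega
  have hstep : ∀ n : ℕ, 0 < n →
      jsr Γ ≤ z2e (tnorm (tpow P n)) / ((n * ℓ : ℕ) : EReal) := by
    intro n hn
    have hpos : 0 < n * ℓ := Nat.mul_pos hn hℓ
    refine (iInf₂_le (n*ℓ) hpos).trans ?_
    have hmem' : ∀ N ∈ (List.replicate n L).flatten, N ∈ Γ := by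
      intro N hN
      rw [List.mem_flatten] at hN
      obtain ⟨l, hl, hNl⟩ := hN
      rw [List.eq_of_mem_replicate hl] at hNl
      exact hmem N hNl
    have hlen' : ((List.replicate n L).flatten).length = n * ℓ := by
      rw [length_join_replicate, hlen]
    have hel : z2e (tnorm (prodL ((List.replicate n L).flatten))) / ((n*ℓ : ℕ) : EReal)
        ∈ {x : EReal | ∃ L' : List (Mat d), L'.length = n*ℓ ∧ (∀ N ∈ L', N ∈ Γ) ∧
            x = z2e (tnorm (prodL L')) / ((n*ℓ : ℕ) : EReal)} :=
      ⟨(List.replicate n L).flatten, hlen', hmem', rfl⟩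
    refine (sInf_le hel).trans_eq ?_
    rw [prodL_join_replicate L hLne n hn]
  rcases eq_or_ne (rho P) ⊥ with hbot | hneb
  · have h1 := hstep (d+1) (Nat.succ_pos d)
    rw [tnorm_tpow_bot hbot (Nat.le_succ d), z2e_bot,
      EReal.bot_div_of_pos_ne_top (natCast_ereal_pos (Nat.mul_pos (Nat.succ_pos d) hℓ))
        (EReal.natCast_ne_top _)] at h1
    exact h1.trans bot_le
  · have hnet : rho P ≠ ⊤ := by
      intro h
      have := rho_le_tnorm P
      rw [h, top_le_iff] at this
      exact z2e_ne_top _ this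
    obtain ⟨r, hr⟩ : ∃ r : ℝ, rho P = (r : EReal) :=
      ⟨(rho P).toReal, (EReal.coe_toReal hnet hneb).symm⟩
    obtain ⟨B, hB⟩ : ∃ B : ℝ, ∀ i j, z2e (P i j) ≤ (B : EReal) := by
      cases htn : tnorm P with
      | none =>
        refine ⟨0, fun i j => ?_⟩
        have : P i j = ⊥ := le_bot_iff.mp ((le_tnorm P i j).trans htn.le)
        rw [this, z2e_bot]; exact bot_le
      | some t =>
        exact ⟨(t:ℝ), fun i j => (z2e_mono ((le_tnorm P i j).trans_eq htn))⟩
    set K : ℝ := (d:ℝ) * max (B - r) 0 with hK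
    have hchain : ∀ n : ℕ, 0 < n →
        jsr Γ ≤ ((((n:ℝ) * r + K) / ((n:ℝ) * (ℓ:ℝ)) : ℝ) : EReal) := by
      intro n hn
      refine (hstep n hn).trans ?_
      have h2 := tnorm_tpow_le P (le_of_eq hr) hB n
      have h3 : z2e (tnorm (tpow P n)) / ((n * ℓ : ℕ) : EReal)
          ≤ ((((n:ℝ) * r + K) : ℝ) : EReal) / ((n * ℓ : ℕ) : EReal) :=
        EReal.div_le_div_right_of_nonneg (le_of_lt (natCast_ereal_pos (Nat.mul_pos hn hℓ))) h2
      refine h3.trans_eq ?_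
      rw [← EReal.coe_coe_eq_natCast, ← EReal.coe_div]
      norm_num
    have hlim : Filter.Tendsto (fun n : ℕ => (((n:ℝ) * r + K) / ((n:ℝ) * (ℓ:ℝ)) : ℝ))
        Filter.atTop (nhds (r / (ℓ:ℝ))) := by
      have h0 : Filter.Tendsto (fun n : ℕ => (K / (n:ℝ) : ℝ)) Filter.atTop (nhds 0) :=
        tendsto_const_div_atTop_nhds_zero_nat K
      have h1 : Filter.Tendsto (fun n : ℕ => ((r + K / (n:ℝ)) / (ℓ:ℝ) : ℝ))
          Filter.atTop (nhds ((r + 0) / (ℓ:ℝ))) :=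
        (tendsto_const_nhds.add h0).div_const (ℓ:ℝ)
      rw [add_zero] at h1
      refine h1.congr' ?_
      filter_upwards [Filter.eventually_ge_atTop 1] with n hn
      have hn0 : (n:ℝ) ≠ 0 := by
        have : (0:ℝ) < (n:ℝ) := by exact_mod_cast hn
        exact ne_of_gt this
      have hl0 : (ℓ:ℝ) ≠ 0 := by
        have : (0:ℝ) < (ℓ:ℝ) := by exact_mod_cast hℓ
        exact ne_of_gt this
      field_simp
    have hlimE : Filter.Tendsto
        (fun n : ℕ => (((((n:ℝ) * r + K) / ((n:ℝ) * (ℓ:ℝ)) : ℝ)) : EReal))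
        Filter.atTop (nhds ((r / (ℓ:ℝ) : ℝ) : EReal)) :=
      EReal.tendsto_coe.mpr hlim
    have hje : jsr Γ ≤ ((r / (ℓ:ℝ) : ℝ) : EReal) := by
      refine ge_of_tendsto hlimE ?_
      filter_upwards [Filter.eventually_ge_atTop 1] with n hn
      exact hchain n hn
    refine hje.trans_eq ?_
    rw [EReal.coe_div, hr, EReal.coe_coe_eq_natCast]

lemma sInf_le_sInf_of_forall_exists_le {s t : Set EReal}
    (h : ∀ x ∈ t, ∃ y ∈ s, y ≤ x) : sInf s ≤ sInf t :=
  le_sInf fun x hx => by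
    obtain ⟨y, hy, hyx⟩ := h x hx
    exact (sInf_le hy).trans hyx

end Aux5
theorem stmt_5 {d : ℕ} (Γ : Set (Mat d)) (hfin : Γ.Finite) (hne : Γ.Nonempty) :
    jsr Γ = ⨅ (ℓ : ℕ) (_ : 0 < ℓ),
      sInf {x : EReal | ∃ L : List (Mat d), L.length = ℓ ∧ (∀ N ∈ L, N ∈ Γ) ∧
        x = rho (prodL L) / (ℓ : EReal)} := by
  refine le_antisymm ?_ ?_
  · -- jsr ≤ inf of rho-averages
    refine le_iInf fun ℓ => le_iInf fun hℓ => le_sInf fun x hx => ?_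
    obtain ⟨L, hlen, hmem, rfl⟩ := hx
    exact jsr_le_rho Γ hℓ hlen hmem
  · -- inf of rho-averages ≤ jsr, since rho ≤ norm
    refine le_iInf fun ℓ => le_iInf fun hℓ => ?_
    refine le_trans (iInf₂_le ℓ hℓ) ?_
    refine sInf_le_sInf_of_forall_exists_le fun x hx => ?_
    obtain ⟨L, hlen, hmem, rfl⟩ := hx
    refine ⟨rho (prodL L) / (ℓ : EReal), ⟨L, hlen, hmem, rfl⟩, ?_⟩
    exact EReal.div_le_div_right_of_nonneg
      (le_of_lt (natCast_ereal_pos hℓ)) (rho_le_tnorm (prodL L))
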